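/- arXiv:1811.06749 — 2 statements merged into one kernel-verified Lean document; each statement's English description precedes it below -/
import Mathlib

section
/- Let $a_1,\dots,a_n$ be integers with $-i \leq a_i \leq n-i$ and $\sum_{i=1}^n \log_2 \max(|a_i|,1) = m$. Then there exist sequences of natural numbers $(w_i)_{i=1}^n$ and integers $(b_i)_{i=1}^n$ such that for all $i$: $w_i \geq 2\log_2 \max(|b_i|,1) + 1$, $P(i) + b_i \cdot \mathrm{sign} = P(i + a_i)$ where $P(j) = \sum_{l=1}^{j-1} w_l$ (i.e., $b_i$ equals the signed bit-distance from position $i$ to position $i+a_i$), and $\sum_{i=1}^n w_i = O(m + n)$. -/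
open Real Finset

namespace Stmt15Aux


/-- log-magnitude class of offset `a i`, at least 1. -/
def kk (a : ℕ → ℤ) (i : ℕ) : ℕ := Nat.log 2 (a i).natAbs + 1

/-- `AA a l ≈ ⌈log₂ (kk a l + 2)⌉`. -/
def AA (a : ℕ → ℤ) (l : ℕ) : ℕ := Nat.log 2 (kk a l) + 2

def tt (a : ℕ → ℤ) (i l : ℕ) : ℕ := AA a l - Nat.log 2 (Nat.dist i l)

def ee (n : ℕ) (a : ℕ → ℤ) (i : ℕ) : ℕ := (Finset.range n).sup (tt a i)

def ww (n : ℕ) (a : ℕ → ℤ) (i : ℕ) : ℕ := 8 * (kk a i + ee n a i + 4)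

lemma kk_pos (a : ℕ → ℤ) (i : ℕ) : 1 ≤ kk a i := Nat.le_add_left 1 _

lemma natAbs_lt_pow_kk (a : ℕ → ℤ) (i : ℕ) : (a i).natAbs < 2 ^ kk a i :=
  Nat.lt_pow_succ_log_self one_lt_two _

lemma kk_add_two_le_pow_AA (a : ℕ → ℤ) (l : ℕ) : kk a l + 2 ≤ 2 ^ AA a l := by
  have h1 : kk a l < 2 ^ (Nat.log 2 (kk a l) + 1) := Nat.lt_pow_succ_log_self one_lt_two _
  have : 2 ^ AA a l = 2 * 2 ^ (Nat.log 2 (kk a l) + 1) := by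
    rw [AA]; ring
  omega

lemma pow_AA_le (a : ℕ → ℤ) (l : ℕ) : 2 ^ AA a l ≤ 4 * kk a l := by
  have h1 : 2 ^ Nat.log 2 (kk a l) ≤ kk a l :=
    Nat.pow_log_le_self 2 (by have := kk_pos a l; omega)
  have : 2 ^ AA a l = 4 * 2 ^ Nat.log 2 (kk a l) := by rw [AA]; ring
  omega

lemma AA_le_kk_add_two (a : ℕ → ℤ) (l : ℕ) : AA a l ≤ kk a l + 2 := by
  have := Nat.log_lt_self 2 (show kk a l ≠ 0 by have := kk_pos a l; omega)
  rw [AA]; omega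

/-- master inequality -/
lemma AA_le (n : ℕ) (a : ℕ → ℤ) (i l : ℕ) (hl : l < n) :
    AA a l ≤ ee n a i + Nat.log 2 (Nat.dist i l) := by
  have h : tt a i l ≤ ee n a i := Finset.le_sup (Finset.mem_range.mpr hl)
  rw [tt] at h
  omega

lemma u_add_three_le (u : ℕ) : u + 3 ≤ 3 * 2 ^ u := by
  induction u with
  | zero => norm_num
  | succ v ih =>
    have : (1:ℕ) ≤ 2 ^ v := Nat.one_le_two_pow
    have : 2 ^ (v + 1) = 2 * 2 ^ v := by ring
    omega

/-- pointwise width bound for entries near `i` -/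
lemma ww_le (n : ℕ) (a : ℕ → ℤ) (i l : ℕ) (hi : i < n) (hl : l < n)
    (hd : Nat.dist i l ≤ 2 ^ kk a i) :
    ww n a l ≤ 2 ^ (kk a i + ee n a i + 5) := by
  set k := kk a i with hk
  set e := ee n a i with he
  have hlogd : Nat.log 2 (Nat.dist i l) ≤ k := by
    calc Nat.log 2 (Nat.dist i l) ≤ Nat.log 2 (2 ^ k) := Nat.log_mono_right hd
    _ = k := Nat.log_pow one_lt_two k
  -- k_l bound
  have hkl : kk a l + 2 ≤ 2 ^ (e + k) := by
    calc kk a l + 2 ≤ 2 ^ AA a l := kk_add_two_le_pow_AA a l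
    _ ≤ 2 ^ (e + k) := Nat.pow_le_pow_right (by norm_num)
        (by have := AA_le n a i l hl; omega)
  -- e_l bound
  have hel : ee n a l ≤ e + k + 1 := by
    apply Finset.sup_le
    intro l' hl'
    rw [Finset.mem_range] at hl'
    rw [tt]
    have hA : AA a l' ≤ e + Nat.log 2 (Nat.dist i l') := AA_le n a i l' hl'
    -- claim: log (dist i l') ≤ log (dist l l') + k + 1
    have hclaim : Nat.log 2 (Nat.dist i l') ≤ Nat.log 2 (Nat.dist l l') + k + 1 := by
      have htri : Nat.dist i l' ≤ Nat.dist i l + Nat.dist l l' :=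
        Nat.dist.triangle_inequality i l l'
      by_cases hc : Nat.dist l l' ≤ 2 ^ k
      · have h1 : Nat.dist i l' ≤ 2 ^ (k + 1) := by
          have : (2:ℕ) ^ (k+1) = 2 ^ k + 2 ^ k := by ring
          omega
        have : Nat.log 2 (Nat.dist i l') ≤ Nat.log 2 (2^(k+1)) := Nat.log_mono_right h1
        rw [Nat.log_pow one_lt_two] at this
        omega
      · push_neg at hc
        have hd1 : (1:ℕ) ≤ Nat.dist l l' := by
          have : (1:ℕ) ≤ 2 ^ k := Nat.one_le_two_pow
          omega
        have h1 : Nat.dist i l' ≤ Nat.dist l l' * 2 := by omega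
        have : Nat.log 2 (Nat.dist i l') ≤ Nat.log 2 (Nat.dist l l' * 2) := Nat.log_mono_right h1
        rw [Nat.log_mul_base one_lt_two (by omega)] at this
        omega
    omega
  -- combine
  rw [ww]
  have h31 : kk a l + ee n a l + 4 ≤ 2 ^ (e + k) + (e + k) + 3 := by omega
  have h32 : (e + k) + 3 ≤ 3 * 2 ^ (e + k) := u_add_three_le _
  calc 8 * (kk a l + ee n a l + 4) ≤ 8 * (4 * 2 ^ (e + k)) := by omega
  _ = 2 ^ (e + k + 5) := by ring
  _ = 2 ^ (k + e + 5) := by rw [Nat.add_comm e k]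




lemma sum_ind (N c : ℕ) : ∑ j ∈ Finset.range N, (if c ≤ j then 1 else 0) = N - c := by
  induction N with
  | zero => simp
  | succ M ih =>
    rw [Finset.sum_range_succ, ih]
    by_cases h : c ≤ M
    · simp [h]; omega
    · simp [h]; omega

lemma sub_log_eq (A d : ℕ) (hd : 1 ≤ d) :
    A - Nat.log 2 d = ∑ j ∈ Finset.range A, (if d < 2 ^ (j+1) then 1 else 0) := by
  have : ∀ j, (d < 2 ^ (j+1)) ↔ (Nat.log 2 d ≤ j) := by
    intro j
    rw [← Nat.log_lt_iff_lt_pow one_lt_two (by omega)]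
    omega
  simp only [this]
  rw [sum_ind]

lemma sum_pow_succ_le (A : ℕ) : ∑ j ∈ Finset.range A, 2 ^ (j+1) ≤ 2 ^ (A+1) := by
  induction A with
  | zero => simp
  | succ B ih =>
    rw [Finset.sum_range_succ]
    have : (2:ℕ) ^ (B+1+1) = 2 ^ (B+1) + 2^(B+1) := by ring
    omega

lemma sum_sub_log_le (A n : ℕ) :
    ∑ d ∈ Finset.Icc 1 n, (A - Nat.log 2 d) ≤ 2 ^ (A + 1) := by
  have h1 : ∑ d ∈ Finset.Icc 1 n, (A - Nat.log 2 d)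
      = ∑ j ∈ Finset.range A, ∑ d ∈ Finset.Icc 1 n, (if d < 2 ^ (j+1) then 1 else 0) := by
    rw [Finset.sum_comm]
    apply Finset.sum_congr rfl
    intro d hd
    rw [Finset.mem_Icc] at hd
    exact sub_log_eq A d hd.1
  rw [h1]
  have h2 : ∀ j, ∑ d ∈ Finset.Icc 1 n, (if d < 2 ^ (j+1) then (1:ℕ) else 0) ≤ 2 ^ (j+1) := by
    intro j
    calc ∑ d ∈ Finset.Icc 1 n, (if d < 2 ^ (j+1) then (1:ℕ) else 0)
        = ((Finset.Icc 1 n).filter (fun d => d < 2^(j+1))).card :=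
          (Finset.card_filter _ _).symm
    _ ≤ (Finset.Ico 1 (2^(j+1))).card := by
          apply Finset.card_le_card
          intro d hd
          simp only [Finset.mem_filter, Finset.mem_Icc, Finset.mem_Ico] at *
          omega
    _ = 2^(j+1) - 1 := by rw [Nat.card_Ico]
    _ ≤ 2^(j+1) := Nat.sub_le _ _
  calc ∑ j ∈ Finset.range A, ∑ d ∈ Finset.Icc 1 n, (if d < 2 ^ (j+1) then (1:ℕ) else 0)
      ≤ ∑ j ∈ Finset.range A, 2 ^ (j+1) := Finset.sum_le_sum (fun j _ => h2 j)
  _ ≤ 2 ^ (A+1) := sum_pow_succ_le A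

/-- sum over positions of (A - log dist) -/
lemma sum_dist_le (A n l : ℕ) (hl : l < n) :
    ∑ i ∈ Finset.range n, (A - Nat.log 2 (Nat.dist i l)) ≤ 3 * A + 2 ^ (A + 2) := by
  set f : ℕ → ℕ := fun d => A - Nat.log 2 d with hf
  have key : ∀ m, ∑ d ∈ Finset.range m, f d ≤ A + 2 ^ (A+1) := by
    intro m
    cases m with
    | zero => simp
    | succ m' =>
      rw [Finset.sum_range_succ']
      have h1 : ∑ j ∈ Finset.range m', f (j+1) ≤ ∑ d ∈ Finset.Icc 1 m', f d := by
        rw [show Finset.Icc 1 m' = Finset.Ico 1 (m'+1) by rfl, Finset.sum_Ico_eq_sum_range]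
        simp only [Nat.add_sub_cancel]
        apply Finset.sum_le_sum
        intro j _
        rw [Nat.add_comm 1 j]
      have h2 : ∑ d ∈ Finset.Icc 1 m', f d ≤ 2 ^ (A+1) := sum_sub_log_le A m'
      have h3 : f 0 = A := by simp [hf]
      omega
  -- split range n at l
  have hsplit : ∑ i ∈ Finset.range n, (A - Nat.log 2 (Nat.dist i l))
      = ∑ i ∈ Finset.Ico 0 (l+1), (A - Nat.log 2 (Nat.dist i l))
        + ∑ i ∈ Finset.Ico (l+1) n, (A - Nat.log 2 (Nat.dist i l)) := by
    rw [Finset.sum_Ico_consecutive _ (Nat.zero_le _) hl]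
    rw [Finset.range_eq_Ico]
  have hA1 : ∑ i ∈ Finset.Ico 0 (l+1), (A - Nat.log 2 (Nat.dist i l))
      ≤ A + 2 ^ (A+1) := by
    have heq : ∑ i ∈ Finset.Ico 0 (l+1), (A - Nat.log 2 (Nat.dist i l))
        = ∑ d ∈ Finset.range (l+1), f d := by
      rw [← Finset.range_eq_Ico]
      rw [show (∑ i ∈ Finset.range (l+1), (A - Nat.log 2 (Nat.dist i l)))
          = ∑ i ∈ Finset.range (l+1), f (l + 1 - 1 - i) from
        Finset.sum_congr rfl (fun i hi => by
          rw [Finset.mem_range] at hi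
          rw [Nat.dist_eq_sub_of_le (by omega : i ≤ l)]
          simp only [hf]
          first
          | rfl
          | (congr 2; omega))]
      exact Finset.sum_range_reflect f (l+1)
    rw [heq]; exact key _
  have hA2 : ∑ i ∈ Finset.Ico (l+1) n, (A - Nat.log 2 (Nat.dist i l))
      ≤ A + 2 ^ (A+1) := by
    have : ∑ i ∈ Finset.Ico (l+1) n, (A - Nat.log 2 (Nat.dist i l))
        = ∑ j ∈ Finset.range (n - (l+1)), f (j + 1) := by
      rw [Finset.sum_Ico_eq_sum_range]
      apply Finset.sum_congr rfl
      intro j _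
      have : Nat.dist (l+1+j) l = j + 1 := by
        rw [Nat.dist_comm, Nat.dist_eq_sub_of_le (by omega)]
        omega
      simp only [hf, this]
    rw [this]
    calc ∑ j ∈ Finset.range (n - (l+1)), f (j+1)
        ≤ ∑ d ∈ Finset.range (n - l), f d := by
          rw [show n - l = (n - (l+1)) + 1 by omega, Finset.sum_range_succ']
          exact Nat.le_add_right _ _
    _ ≤ A + 2^(A+1) := key _
  have : (2:ℕ)^(A+2) = 2^(A+1) + 2^(A+1) := by ring
  omega

end Stmt15Aux

open Stmt15Aux

/-- Bit-offset expansion theorem: offsets `a i` (0-based, with target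
index `i + a i` in `[0, n-1]`) of total log-magnitude `m` can be
expanded to self-referential bit-offsets `b i` (the signed bit-distance
`P(i + a i) - P(i)` where `P j = ∑_{l < j} w l`), each gamma-encodable
within its width (`w i ≥ 2 log₂|b i| + 1`), with total width
`∑ w i = O(m + n)`. -/
theorem stmt15 :
    ∃ C : ℝ, 0 < C ∧ ∀ (n : ℕ) (a : ℕ → ℤ),
      (∀ i < n, -(i : ℤ) ≤ a i ∧ a i ≤ (n : ℤ) - (i : ℤ) - 1) →
      ∃ (w : ℕ → ℕ) (b : ℕ → ℤ),
        (∀ i < n, 2 * Real.logb 2 (max |(b i : ℝ)| 1) + 1 ≤ (w i : ℝ)) ∧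
        (∀ i < n, b i =
          (∑ l ∈ Finset.range ((i + a i).toNat), (w l : ℤ)) -
          (∑ l ∈ Finset.range i, (w l : ℤ))) ∧
        (∑ i ∈ Finset.range n, (w i : ℝ)) ≤
          C * ((∑ i ∈ Finset.range n, Real.logb 2 (max |(a i : ℝ)| 1))
            + (n : ℝ)) := by
  refine ⟨1000, by norm_num, ?_⟩
  intro n a ha
  refine ⟨ww n a, fun i => (∑ l ∈ Finset.range ((i + a i).toNat), (ww n a l : ℤ)) -
      ∑ l ∈ Finset.range i, (ww n a l : ℤ), ?_, fun i _ => rfl, ?_⟩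
  · -- condition 1
    intro i hi
    obtain ⟨h1, h2⟩ := ha i hi
    set q := (i + a i).toNat with hq
    have hq1 : (q : ℤ) = i + a i := Int.toNat_of_nonneg (by omega)
    have hqn : q < n := by omega
    set p := min i q with hp
    set r := max i q with hr
    have hcard : r - p = (a i).natAbs := by omega
    set N : ℕ := ∑ l ∈ Finset.Ico p r, ww n a l with hN
    -- |b i| = N
    have habs : |((∑ l ∈ Finset.range q, (ww n a l : ℤ)) -
        ∑ l ∈ Finset.range i, (ww n a l : ℤ))| = (N : ℤ) := by
      rcases le_total i q with hle | hle
      · rw [← Finset.sum_Ico_eq_sub (fun l => (ww n a l : ℤ)) hle]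
        have hpr : p = i ∧ r = q := by constructor <;> omega
        rw [hN, hpr.1, hpr.2]
        push_cast
        exact abs_of_nonneg (Finset.sum_nonneg fun l _ => by positivity)
      · rw [← neg_sub, abs_neg,
          ← Finset.sum_Ico_eq_sub (fun l => (ww n a l : ℤ)) hle]
        have hpr : p = q ∧ r = i := by constructor <;> omega
        rw [hN, hpr.1, hpr.2]
        push_cast
        exact abs_of_nonneg (Finset.sum_nonneg fun l _ => by positivity)
    -- bound N
    have hterm : ∀ l ∈ Finset.Ico p r, ww n a l ≤ 2 ^ (kk a i + ee n a i + 5) := by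
      intro l hl
      rw [Finset.mem_Ico] at hl
      apply ww_le n a i l hi (by omega)
      have hdist : Nat.dist i l = (i - l) + (l - i) := rfl
      have := natAbs_lt_pow_kk a i
      omega
    have hNle : N ≤ 2 ^ (kk a i + (kk a i + ee n a i + 5)) := by
      calc N ≤ (Finset.Ico p r).card • 2 ^ (kk a i + ee n a i + 5) :=
            Finset.sum_le_card_nsmul _ _ _ hterm
      _ = (r - p) * 2 ^ (kk a i + ee n a i + 5) := by rw [Nat.card_Ico, smul_eq_mul]
      _ ≤ 2 ^ kk a i * 2 ^ (kk a i + ee n a i + 5) := by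
            apply Nat.mul_le_mul_right
            rw [hcard]
            exact (natAbs_lt_pow_kk a i).le
      _ = 2 ^ (kk a i + (kk a i + ee n a i + 5)) := by rw [← pow_add]
    -- real side
    set h : ℕ := kk a i + (kk a i + ee n a i + 5) with hh
    have hb_abs : |(((∑ l ∈ Finset.range q, (ww n a l : ℤ)) -
        ∑ l ∈ Finset.range i, (ww n a l : ℤ) : ℤ) : ℝ)| = (N : ℝ) := by
      rw [← Int.cast_abs, habs]; push_cast; ring
    have hmax : max |(((∑ l ∈ Finset.range q, (ww n a l : ℤ)) -
        ∑ l ∈ Finset.range i, (ww n a l : ℤ) : ℤ) : ℝ)| 1 ≤ (2:ℝ) ^ h := by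
      apply max_le
      · rw [hb_abs]
        calc (N:ℝ) ≤ ((2^h : ℕ) : ℝ) := by exact_mod_cast hNle
        _ = (2:ℝ)^h := by push_cast; ring
      · exact one_le_pow₀ (by norm_num)
    have hlog : Real.logb 2 (max |(((∑ l ∈ Finset.range q, (ww n a l : ℤ)) -
        ∑ l ∈ Finset.range i, (ww n a l : ℤ) : ℤ) : ℝ)| 1) ≤ (h : ℝ) := by
      have h0 : (0:ℝ) < max |(((∑ l ∈ Finset.range q, (ww n a l : ℤ)) -
          ∑ l ∈ Finset.range i, (ww n a l : ℤ) : ℤ) : ℝ)| 1 :=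
        lt_of_lt_of_le one_pos (le_max_right _ _)
      calc Real.logb 2 _ ≤ Real.logb 2 ((2:ℝ)^h) :=
            (Real.logb_le_logb one_lt_two h0 (by positivity)).mpr hmax
      _ = (h : ℝ) := by
            rw [Real.logb_pow, Real.logb_self_eq_one one_lt_two, mul_one]
    show 2 * Real.logb 2 _ + 1 ≤ ((ww n a i : ℕ) : ℝ)
    have hwv : (ww n a i : ℝ) = 8 * (kk a i + ee n a i + 4) := by
      rw [ww]; push_cast; ring
    have hhv : (h : ℝ) = 2 * kk a i + ee n a i + 5 := by rw [hh]; push_cast; ring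
    have hk0 : (0:ℝ) ≤ kk a i := Nat.cast_nonneg _
    have he0 : (0:ℝ) ≤ ee n a i := Nat.cast_nonneg _
    nlinarith [hlog]
  · -- condition 3
    have hsup_le_sum : ∀ i ∈ Finset.range n, ee n a i ≤ ∑ l ∈ Finset.range n, tt a i l :=
      fun i _ => Finset.sup_le fun l hl =>
        Finset.single_le_sum (fun _ _ => Nat.zero_le _) hl
    have hperl : ∀ l ∈ Finset.range n, ∑ i ∈ Finset.range n, tt a i l ≤ 19 * kk a l + 6 := by
      intro l hl
      rw [Finset.mem_range] at hl
      have h1 : ∑ i ∈ Finset.range n, tt a i l ≤ 3 * AA a l + 2 ^ (AA a l + 2) := by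
        simpa [tt] using Stmt15Aux.sum_dist_le (AA a l) n l hl
      have h2 : AA a l ≤ kk a l + 2 := AA_le_kk_add_two a l
      have h3 : (2:ℕ) ^ (AA a l + 2) = 4 * 2 ^ AA a l := by ring
      have h4 : 2 ^ AA a l ≤ 4 * kk a l := pow_AA_le a l
      omega
    have hnat : ∑ i ∈ Finset.range n, ww n a i
        ≤ 160 * (∑ i ∈ Finset.range n, kk a i) + 80 * n := by
      have he : ∑ i ∈ Finset.range n, ee n a i
          ≤ 19 * (∑ l ∈ Finset.range n, kk a l) + 6 * n := by
        calc ∑ i ∈ Finset.range n, ee n a i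
            ≤ ∑ i ∈ Finset.range n, ∑ l ∈ Finset.range n, tt a i l :=
              Finset.sum_le_sum hsup_le_sum
        _ = ∑ l ∈ Finset.range n, ∑ i ∈ Finset.range n, tt a i l := Finset.sum_comm
        _ ≤ ∑ l ∈ Finset.range n, (19 * kk a l + 6) := Finset.sum_le_sum hperl
        _ = 19 * (∑ l ∈ Finset.range n, kk a l) + 6 * n := by
              rw [Finset.sum_add_distrib, ← Finset.mul_sum, Finset.sum_const,
                Finset.card_range, smul_eq_mul, Nat.mul_comm n 6]
      have hww : ∑ i ∈ Finset.range n, ww n a i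
          = 8 * (∑ i ∈ Finset.range n, kk a i) + 8 * (∑ i ∈ Finset.range n, ee n a i)
            + 32 * n := by
        calc ∑ i ∈ Finset.range n, ww n a i
            = ∑ i ∈ Finset.range n, (8 * kk a i + 8 * ee n a i + 32) :=
              Finset.sum_congr rfl (fun i _ => by rw [ww]; ring)
        _ = _ := by
              rw [Finset.sum_add_distrib, Finset.sum_add_distrib, ← Finset.mul_sum,
                ← Finset.mul_sum, Finset.sum_const, Finset.card_range, smul_eq_mul,
                Nat.mul_comm n 32]
      omega
    have hM0 : 0 ≤ ∑ i ∈ Finset.range n, Real.logb 2 (max |((a i : ℤ) : ℝ)| 1) :=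
      Finset.sum_nonneg fun i _ => Real.logb_nonneg one_lt_two (le_max_right _ _)
    have hkreal : ∑ i ∈ Finset.range n, (kk a i : ℝ)
        ≤ (∑ i ∈ Finset.range n, Real.logb 2 (max |((a i : ℤ) : ℝ)| 1)) + n := by
      have hstep : ∀ i ∈ Finset.range n,
          (kk a i : ℝ) ≤ Real.logb 2 (max |((a i : ℤ) : ℝ)| 1) + 1 := by
        intro i _
        have key : ((Nat.log 2 (a i).natAbs : ℕ) : ℝ)
            ≤ Real.logb 2 (max |((a i : ℤ) : ℝ)| 1) := by
          rcases Nat.eq_zero_or_pos (a i).natAbs with h0 | h0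
          · rw [h0, Nat.log_zero_right, Nat.cast_zero]
            exact Real.logb_nonneg one_lt_two (le_max_right _ _)
          · have hA : (2:ℝ) ^ (Nat.log 2 (a i).natAbs) ≤ ((a i).natAbs : ℝ) := by
              exact_mod_cast Nat.pow_log_le_self 2 (by omega)
            have habs2 : (((a i).natAbs : ℕ) : ℝ) = |((a i : ℤ) : ℝ)| := by
              push_cast [Nat.cast_natAbs]
              ring
            have hle2 : (((a i).natAbs : ℕ) : ℝ) ≤ max |((a i : ℤ) : ℝ)| 1 :=
              le_trans (le_of_eq habs2) (le_max_left _ _)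
            calc ((Nat.log 2 (a i).natAbs : ℕ) : ℝ)
                = Real.logb 2 ((2:ℝ) ^ (Nat.log 2 (a i).natAbs)) := by
                  rw [Real.logb_pow, Real.logb_self_eq_one one_lt_two, mul_one]
            _ ≤ Real.logb 2 (max |((a i : ℤ) : ℝ)| 1) :=
                  (Real.logb_le_logb one_lt_two (by positivity)
                    (lt_of_lt_of_le one_pos (le_max_right _ _))).mpr
                    (le_trans hA hle2)
        rw [kk]
        push_cast
        linarith
      calc ∑ i ∈ Finset.range n, (kk a i : ℝ)
          ≤ ∑ i ∈ Finset.range n, (Real.logb 2 (max |((a i : ℤ) : ℝ)| 1) + 1) :=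
            Finset.sum_le_sum hstep
      _ = _ := by rw [Finset.sum_add_distrib, Finset.sum_const, Finset.card_range,
            nsmul_eq_mul, mul_one]
    have hcast : (∑ i ∈ Finset.range n, (ww n a i : ℝ))
        ≤ 160 * (∑ i ∈ Finset.range n, (kk a i : ℝ)) + 80 * n := by
      calc (∑ i ∈ Finset.range n, (ww n a i : ℝ))
          = ((∑ i ∈ Finset.range n, ww n a i : ℕ) : ℝ) := by push_cast; rfl
      _ ≤ ((160 * (∑ i ∈ Finset.range n, kk a i) + 80 * n : ℕ) : ℝ) :=
            Nat.cast_le.mpr hnat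
      _ = 160 * (∑ i ∈ Finset.range n, (kk a i : ℝ)) + 80 * n := by push_cast; ring
    linarith
end

section
/- There exists a weighted graph $G$ satisfying the $n^c$ edge separator theorem with respect to its edge weights, together with a recursive separator partition $P$ of $G$ with average region size $\Theta(n/\log n)$, such that the total weight of edges not contained inside any region of $P$ is $\Theta(W)$, where $W$ is the total edge weight. Hence the bound $O(W/\bar r^{1-c})$ with $\bar r$ the average region size fails for weighted graphs. -/
open Real Finset

variable {V : Type} [Fintype V] [DecidableEq V]

/-- Total weight of edges between vertex sets `A` and `B`. -/
noncomputable def cutW (w : V → V → ℝ) (A B : Finset V) : ℝ :=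
  ∑ a ∈ A, ∑ b ∈ B, w a b

/-- Total weight of edges inside `U` (each unordered pair counted once). -/
noncomputable def totW (w : V → V → ℝ) (U : Finset V) : ℝ :=
  (∑ a ∈ U, ∑ b ∈ U, w a b) / 2

/-- The weighted `n^c` edge separator theorem holds for `w` (with
balance `α` and constant `β`) on every induced subgraph. -/
def SepThm (w : V → V → ℝ) (c α β : ℝ) : Prop :=
  ∀ U : Finset V, 2 ≤ U.card →
    ∃ A B : Finset V, A ∪ B = U ∧ Disjoint A B ∧ A.Nonempty ∧ B.Nonempty ∧
      (A.card : ℝ) ≤ α * U.card ∧ (B.card : ℝ) ≤ α * U.card ∧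
      cutW w A B ≤ β * totW w U / (U.card : ℝ) ^ (1 - c)

/-- `RecSep w c α β U P`: `P` is a recursive separator partition of `U`,
obtained by recursively splitting via balanced separators of weight at
most `β · W_U / |U|^(1-c)`. -/
inductive RecSep (w : V → V → ℝ) (c α β : ℝ) :
    Finset V → Finset (Finset V) → Prop
  | single (U : Finset V) : RecSep w c α β U {U}
  | split (U A B : Finset V) (PA PB : Finset (Finset V)) :
      A ∪ B = U → Disjoint A B → A.Nonempty → B.Nonempty →
      (A.card : ℝ) ≤ α * U.card → (B.card : ℝ) ≤ α * U.card →
      cutW w A B ≤ β * totW w U / (U.card : ℝ) ^ (1 - c) →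
      RecSep w c α β A PA → RecSep w c α β B PB →
      RecSep w c α β U (PA ∪ PB)

set_option linter.unusedSectionVars false

lemma two_mul_le_two_pow : ∀ m : ℕ, 1 ≤ m → 2 * m ≤ 2 ^ m := by
  intro m hm
  induction m, hm using Nat.le_induction with
  | base => norm_num
  | succ m hm ih =>
    have h2 : 2 ≤ 2 ^ m := by
      calc 2 = 2 ^ 1 := rfl
      _ ≤ 2 ^ m := Nat.pow_le_pow_right (by norm_num) hm
    rw [pow_succ]
    omega

/-- the weight function: a single edge of weight 1 between `z` and `o`. -/
def w2 (z o : V) (a b : V) : ℝ := if (a = z ∧ b = o) ∨ (a = o ∧ b = z) then 1 else 0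

lemma w2_symm (z o a b : V) : w2 z o a b = w2 z o b a := by
  unfold w2; split_ifs with h1 h2 h2 <;> tauto

lemma w2_nonneg (z o a b : V) : 0 ≤ w2 z o a b := by
  unfold w2; split_ifs <;> norm_num

lemma w2_eq (z o : V) (hzo : z ≠ o) (a b : V) :
    w2 z o a b = (if a = z then (1:ℝ) else 0) * (if b = o then 1 else 0)
      + (if a = o then (1:ℝ) else 0) * (if b = z then 1 else 0) := by
  unfold w2
  split_ifs <;> simp_all

lemma cutW_w2 (z o : V) (hzo : z ≠ o) (A B : Finset V) :
    cutW (w2 z o) A B =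
      (if z ∈ A ∧ o ∈ B then (1:ℝ) else 0) + (if o ∈ A ∧ z ∈ B then 1 else 0) := by
  unfold cutW
  have : ∀ a ∈ A, ∑ b ∈ B, w2 z o a b =
      (if a = z then (1:ℝ) else 0) * (∑ b ∈ B, if b = o then (1:ℝ) else 0)
      + (if a = o then (1:ℝ) else 0) * (∑ b ∈ B, if b = z then (1:ℝ) else 0) := by
    intro a _
    rw [Finset.mul_sum, Finset.mul_sum, ← Finset.sum_add_distrib]
    exact Finset.sum_congr rfl fun b _ => w2_eq z o hzo a b
  rw [Finset.sum_congr rfl this, Finset.sum_add_distrib, ← Finset.sum_mul, ← Finset.sum_mul]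
  rw [Finset.sum_ite_eq' A z (fun _ => (1:ℝ)), Finset.sum_ite_eq' A o (fun _ => (1:ℝ)),
    Finset.sum_ite_eq' B z (fun _ => (1:ℝ)), Finset.sum_ite_eq' B o (fun _ => (1:ℝ))]
  split_ifs <;> norm_num <;> tauto

lemma totW_w2 (z o : V) (hzo : z ≠ o) (U : Finset V) :
    totW (w2 z o) U = if z ∈ U ∧ o ∈ U then 1 else 0 := by
  have h : totW (w2 z o) U = cutW (w2 z o) U U / 2 := rfl
  rw [h, cutW_w2 z o hzo]
  split_ifs with h1 h2 h2 <;> norm_num <;> tauto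

lemma totW_nonneg (w : V → V → ℝ) (h : ∀ a b, 0 ≤ w a b) (U : Finset V) :
    0 ≤ totW w U := by
  unfold totW
  have : (0:ℝ) ≤ ∑ a ∈ U, ∑ b ∈ U, w a b :=
    Finset.sum_nonneg fun a _ => Finset.sum_nonneg fun b _ => h a b
  linarith


/-- balanced split of `U` with a prescribed small set `S` inside one part. -/
lemma balanced_split (U S : Finset V) (hS : S ⊆ U) (hc : S.card ≤ (U.card + 1) / 2)
    (hU : 2 ≤ U.card) :
    ∃ A B : Finset V, A ∪ B = U ∧ Disjoint A B ∧ A.Nonempty ∧ B.Nonempty ∧ S ⊆ A ∧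
      (A.card : ℝ) ≤ 2 / 3 * U.card ∧ (B.card : ℝ) ≤ 2 / 3 * U.card := by
  obtain ⟨A, hSA, hAU, hA⟩ := Finset.exists_subsuperset_card_eq hS hc
    (by omega : (U.card + 1) / 2 ≤ U.card)
  refine ⟨A, U \ A, Finset.union_sdiff_of_subset hAU, Finset.disjoint_sdiff, ?_, ?_, hSA, ?_, ?_⟩
  · rw [← Finset.card_pos]; omega
  · rw [← Finset.card_pos, Finset.card_sdiff_of_subset hAU]; omega
  · have h3 : 3 * A.card ≤ 2 * U.card := by omega
    have := (Nat.cast_le (α := ℝ)).mpr h3; push_cast at this; linarith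
  · rw [Finset.card_sdiff_of_subset hAU]
    have h3 : 3 * (U.card - A.card) ≤ 2 * U.card := by omega
    have h4 := (Nat.cast_le (α := ℝ)).mpr h3
    push_cast [Nat.cast_sub (Finset.card_le_card hAU)] at h4 ⊢
    linarith

lemma sepThm_w2 (z o : V) (hzo : z ≠ o) : SepThm (w2 z o) (1/2) (2/3) 2 := by
  intro U hU
  by_cases hb : z ∈ U ∧ o ∈ U
  · by_cases hm : U.card = 2
    · -- U = {z, o}
      have hsub : ({z, o} : Finset V) ⊆ U := by
        intro x hx; simp at hx; rcases hx with h | h <;> simp [h, hb.1, hb.2]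
      have hcard : ({z, o} : Finset V).card = 2 := by
        rw [Finset.card_insert_of_notMem (by simp [hzo]), Finset.card_singleton]
      have hUe : ({z, o} : Finset V) = U :=
        Finset.eq_of_subset_of_card_le hsub (by omega)
      refine ⟨{z}, {o}, by rw [← hUe]; rfl, by simp [Ne.symm hzo, hzo], ⟨z, by simp⟩, ⟨o, by simp⟩, ?_, ?_, ?_⟩
      · rw [hm]; norm_num
      · rw [hm]; norm_num
      · rw [cutW_w2 z o hzo, totW_w2 z o hzo, hm]
        have e1 : (if z ∈ ({z}:Finset V) ∧ o ∈ ({o}:Finset V) then (1:ℝ) else 0) = 1 := by simp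
        have e2 : (if o ∈ ({z}:Finset V) ∧ z ∈ ({o}:Finset V) then (1:ℝ) else 0) = 0 := by
          simp [Ne.symm hzo]
        rw [e1, e2, if_pos hb, add_zero]
        have h1 : ((2:ℝ)) ^ ((1:ℝ) - 1/2) ≤ 2 := by
          rw [show (1:ℝ) - 1/2 = 1/2 by norm_num]
          calc ((2:ℝ)) ^ ((1:ℝ)/2) ≤ (2:ℝ) ^ (1:ℝ) :=
                Real.rpow_le_rpow_of_exponent_le (by norm_num) (by norm_num)
            _ = 2 := Real.rpow_one 2
        have h2 : (0:ℝ) < ((2:ℝ)) ^ ((1:ℝ) - 1/2) := Real.rpow_pos_of_pos (by norm_num) _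
        have hcast : (((2:ℕ):ℝ)) = (2:ℝ) := by norm_num
        rw [hcast, le_div_iff₀ h2]
        linarith
    · -- |U| ≥ 3, keep z,o together
      have h3 : 3 ≤ U.card := by omega
      obtain ⟨A, B, hun, hdis, hA, hB, hSA, hAc, hBc⟩ :=
        balanced_split U {z, o} (by intro x hx; simp at hx; rcases hx with h | h <;> simp [h, hb.1, hb.2])
          (by
            rw [Finset.card_insert_of_notMem (by simp [hzo]), Finset.card_singleton]
            omega) (by omega)
      refine ⟨A, B, hun, hdis, hA, hB, hAc, hBc, ?_⟩
      have hzA : z ∈ A := hSA (by simp)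
      have hoA : o ∈ A := hSA (by simp)
      have hzB : z ∉ B := fun h => (Finset.disjoint_left.mp hdis hzA) h
      have hoB : o ∉ B := fun h => (Finset.disjoint_left.mp hdis hoA) h
      rw [cutW_w2 z o hzo, totW_w2 z o hzo, if_pos hb]
      simp only [hzB, hoB, and_false, false_and, if_false, add_zero]
      positivity
  · -- edge not inside U : everything has weight 0
    obtain ⟨A, B, hun, hdis, hA, hB, _, hAc, hBc⟩ :=
      balanced_split U ∅ (Finset.empty_subset U) (by simp) hU
    refine ⟨A, B, hun, hdis, hA, hB, hAc, hBc, ?_⟩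
    have hAU : A ⊆ U := hun ▸ Finset.subset_union_left
    have hBU : B ⊆ U := hun ▸ Finset.subset_union_right
    rw [cutW_w2 z o hzo, totW_w2 z o hzo]
    have hz : ¬(z ∈ A ∧ o ∈ B) := fun ⟨h1, h2⟩ => hb ⟨hAU h1, hBU h2⟩
    have ho : ¬(o ∈ A ∧ z ∈ B) := fun ⟨h1, h2⟩ => hb ⟨hBU h2, hAU h1⟩
    simp [hz, ho, hb]


lemma card_filter_val_lt (n m : ℕ) (h : m ≤ n) :
    (Finset.univ.filter (fun v : Fin n => (v : ℕ) < m)).card = m := by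
  have he : (Finset.univ.filter (fun v : Fin n => (v : ℕ) < m)) =
      Finset.attachFin (Finset.range m)
        (fun x hx => lt_of_lt_of_le (Finset.mem_range.mp hx) h) := by
    ext a; simp [Finset.mem_attachFin]
  rw [he, Finset.card_attachFin, Finset.card_range]

set_option maxHeartbeats 1000000 in
lemma chain (n k : ℕ) (hk : 2 ≤ k) (hn : n = 2 ^ k) (z o : Fin n)
    (hzdef : (z : ℕ) = 0) (hodef : (o : ℕ) = 1) :
    ∃ P : Finset (Finset (Fin n)),
      RecSep (w2 z o) (1/2) (2/3) 2 Finset.univ P ∧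
      P.Nonempty ∧ P.card ≤ k ∧
      ∀ p ∈ P, ¬(z ∈ p ∧ o ∈ p) := by
  have hn4 : 4 ≤ n := by
    rw [hn]
    calc 4 = 2 ^ 2 := rfl
    _ ≤ 2 ^ k := Nat.pow_le_pow_right (by norm_num) hk
  have hzo : z ≠ o := by
    intro h; rw [Fin.ext_iff, hzdef, hodef] at h; omega
  set w := w2 z o with hw
  set S : ℕ → Finset (Fin n) := fun j => Finset.univ.filter (fun v => (v : ℕ) < 2 ^ j)
    with hS
  have cardS : ∀ j, j ≤ k → (S j).card = 2 ^ j := fun j hj =>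
    card_filter_val_lt n (2 ^ j) (hn ▸ Nat.pow_le_pow_right (by norm_num) hj)
  have hzS : ∀ j, z ∈ S j := fun j => by
    simp only [hS, Finset.mem_filter, Finset.mem_univ, true_and, hzdef]
    positivity
  have hoS : ∀ j, 1 ≤ j → o ∈ S j := fun j hj => by
    simp only [hS, Finset.mem_filter, Finset.mem_univ, true_and, hodef]
    exact Nat.one_lt_two_pow_iff.mpr (by omega)
  -- main induction
  have main : ∀ j, 2 ≤ j → j ≤ k →
      ∃ P : Finset (Finset (Fin n)), RecSep w (1/2) (2/3) 2 (S j) P ∧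
        P.Nonempty ∧ P.card ≤ j ∧ ∀ p ∈ P, ¬(z ∈ p ∧ o ∈ p) := by
    intro j hj2
    induction j, hj2 using Nat.le_induction with
    | base =>
      intro hjk
      -- split S 2 = {z,v2} ∪ {o,v3}
      set v2 : Fin n := ⟨2, by omega⟩ with hv2
      set v3 : Fin n := ⟨3, by omega⟩ with hv3
      set A : Finset (Fin n) := {z, v2} with hA
      set B : Finset (Fin n) := {o, v3} with hB
      have hun : A ∪ B = S 2 := by
        ext a
        simp only [hA, hB, hS, Finset.mem_union, Finset.mem_insert, Finset.mem_singleton,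
          Finset.mem_filter, Finset.mem_univ, true_and, Fin.ext_iff, hzdef, hodef, hv2, hv3]
        omega
      have hdis : Disjoint A B := by
        rw [Finset.disjoint_left]
        intro x hx hy
        simp only [hA, hB, Finset.mem_insert, Finset.mem_singleton, Fin.ext_iff,
          hzdef, hodef, hv2, hv3] at hx hy
        omega
      have hcardA : A.card = 2 := by
        rw [hA, Finset.card_insert_of_notMem
          (by simp only [Finset.mem_singleton, Fin.ext_iff, hzdef, hv2]; omega),
          Finset.card_singleton]
      have hcardB : B.card = 2 := by
        rw [hB, Finset.card_insert_of_notMem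
          (by simp only [Finset.mem_singleton, Fin.ext_iff, hodef, hv3]; omega),
          Finset.card_singleton]
      have hcardS2 : (S 2).card = 4 := cardS 2 hjk
      have hzA : z ∈ A := by simp [hA]
      have hoB : o ∈ B := by simp [hB]
      have hoA : o ∉ A := by
        simp only [hA, Finset.mem_insert, Finset.mem_singleton, Fin.ext_iff, hzdef, hodef, hv2]
        omega
      have hzB : z ∉ B := by
        simp only [hB, Finset.mem_insert, Finset.mem_singleton, Fin.ext_iff, hzdef, hodef, hv3]
        omega
      have hcut : cutW w A B ≤ 2 * totW w (S 2) / ((S 2).card : ℝ) ^ ((1:ℝ) - 1/2) := by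
        rw [hw, cutW_w2 z o hzo, if_pos ⟨hzA, hoB⟩, if_neg (fun h => hoA h.1), add_zero,
          totW_w2 z o hzo, if_pos ⟨hzS 2, hoS 2 (by norm_num)⟩, hcardS2]
        have h4 : (((4:ℕ):ℝ)) ^ ((1:ℝ) - 1/2) = 2 := by
          rw [show ((1:ℝ) - 1/2) = 1/2 by norm_num, show (((4:ℕ)):ℝ) = (4:ℝ) by norm_num,
            ← Real.sqrt_eq_rpow, show (4:ℝ) = 2 ^ 2 by norm_num, Real.sqrt_sq (by norm_num)]
        rw [h4]; norm_num
      have hrec : RecSep w (1/2) (2/3) 2 (S 2) ({A} ∪ {B}) := by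
        have := RecSep.split (w := w) (c := 1/2) (α := 2/3) (β := 2) (S 2) A B {A} {B}
          hun hdis ⟨z, hzA⟩ ⟨o, hoB⟩
          (by rw [hcardA, hcardS2]; norm_num)
          (by rw [hcardB, hcardS2]; norm_num)
          hcut (RecSep.single A) (RecSep.single B)
        exact this
      refine ⟨{A} ∪ {B}, hrec, ⟨A, by simp⟩, ?_, ?_⟩
      · calc ({A} ∪ {B} : Finset (Finset (Fin n))).card ≤ 1 + 1 :=
            le_trans (Finset.card_union_le _ _) (by simp)
        _ = 2 := rfl
      · intro p hp
        simp at hp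
        rcases hp with h | h <;> subst h <;> tauto
    | succ j hj2 ih =>
      intro hjk
      obtain ⟨P, hP, hPne, hPcard, hPreg⟩ := ih (by omega)
      set T : Finset (Fin n) := S (j+1) \ S j with hT
      have hsub : S j ⊆ S (j+1) := by
        intro x hx
        simp [hS] at hx ⊢
        have : (2:ℕ) ^ j ≤ 2 ^ (j+1) := Nat.pow_le_pow_right (by norm_num) (by omega)
        omega
      have hun : S j ∪ T = S (j+1) := Finset.union_sdiff_of_subset hsub
      have hcardj : (S j).card = 2 ^ j := cardS j (by omega)
      have hcardj1 : (S (j+1)).card = 2 ^ (j+1) := cardS (j+1) hjk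
      have hTcard : T.card = 2 ^ j := by
        rw [hT, Finset.card_sdiff_of_subset hsub, hcardj, hcardj1]
        omega
      have hTne : T.Nonempty := by
        rw [← Finset.card_pos, hTcard]
        positivity
      have hzT : z ∉ T := fun h => (Finset.mem_sdiff.mp h).2 (hzS j)
      have hoT : o ∉ T := fun h => (Finset.mem_sdiff.mp h).2 (hoS j (by omega))
      have hbalA : ((S j).card : ℝ) ≤ 2/3 * ((S (j+1)).card : ℝ) := by
        rw [hcardj, hcardj1]
        push_cast
        rw [pow_succ]
        have : (0:ℝ) < 2 ^ j := by positivity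
        linarith
      have hbalB : (T.card : ℝ) ≤ 2/3 * ((S (j+1)).card : ℝ) := by
        rw [hTcard, hcardj1]
        push_cast
        rw [pow_succ]
        have : (0:ℝ) < 2 ^ j := by positivity
        linarith
      have hcut : cutW w (S j) T ≤ 2 * totW w (S (j+1)) / ((S (j+1)).card : ℝ) ^ ((1:ℝ) - 1/2) := by
        rw [hw, cutW_w2 z o hzo]
        rw [if_neg (fun h => hoT h.2), if_neg (fun h => hzT h.2), add_zero]
        have h1 : (0:ℝ) ≤ totW w (S (j+1)) := totW_nonneg w (fun a b => w2_nonneg z o a b) _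
        positivity
      have hrec : RecSep w (1/2) (2/3) 2 (S (j+1)) (P ∪ {T}) :=
        RecSep.split (S (j+1)) (S j) T P {T} hun Finset.disjoint_sdiff ⟨z, hzS j⟩ hTne
          hbalA hbalB hcut hP (RecSep.single T)
      refine ⟨P ∪ {T}, hrec, hPne.mono Finset.subset_union_left, ?_, ?_⟩
      · calc (P ∪ {T}).card ≤ P.card + 1 :=
            le_trans (Finset.card_union_le _ _) (by simp)
        _ ≤ j + 1 := by omega
      · intro p hp
        rcases Finset.mem_union.mp hp with h | h
        · exact hPreg p h
        · simp at h; subst h; tauto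
  obtain ⟨P, hP, hPne, hPcard, hPreg⟩ := main k hk le_rfl
  have hSk : S k = Finset.univ := by
    ext a
    simp [hS]
    have := a.isLt
    omega
  rw [hSk] at hP
  exact ⟨P, hP, hPne, hPcard, hPreg⟩

/-- Counterexample theorem: there are `c ∈ (0,1)`, `α ∈ [1/2,1)`,
`β > 0` and a family of weighted graphs satisfying the weighted `n^c`
edge separator theorem, with recursive separator partitions having
`O(log n)` regions (so average region size `Ω(n/log n)`) whose
inter-region weight is at least `W/2 = Θ(W)`; hence the bound
`O(W / r̄^(1-c))` with `r̄` the average region size fails. -/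
theorem stmt17 :
    ∃ c α β : ℝ, 0 < c ∧ c < 1 ∧ 1 / 2 ≤ α ∧ α < 1 ∧ 0 < β ∧
      ∃ d : ℝ, 0 < d ∧ ∀ C : ℝ, 0 < C →
        ∃ (n : ℕ) (w : Fin n → Fin n → ℝ) (P : Finset (Finset (Fin n))),
          (∀ a b, w a b = w b a) ∧ (∀ a b, 0 ≤ w a b) ∧
          SepThm w c α β ∧
          RecSep w c α β Finset.univ P ∧ P.Nonempty ∧
          (P.card : ℝ) ≤ d * Real.log n ∧
          totW w Finset.univ / 2 ≤
            totW w Finset.univ - ∑ p ∈ P, totW w p ∧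
          C * totW w Finset.univ / ((n : ℝ) / (P.card : ℝ)) ^ (1 - c) <
            totW w Finset.univ - ∑ p ∈ P, totW w p := by
  refine ⟨1/2, 2/3, 2, by norm_num, by norm_num, by norm_num, by norm_num, by norm_num,
    2, by norm_num, ?_⟩
  intro C hC
  -- choose k with C^2 * k < 2^k
  obtain ⟨N, hN⟩ := exists_nat_gt (C ^ 2)
  set m : ℕ := N + 1 with hm
  have hm1 : 1 ≤ m := by omega
  have hCm : C ^ 2 < (2:ℝ) ^ m := by
    have h1 : (N:ℝ) < (2:ℝ) ^ N := by
      exact_mod_cast Nat.lt_two_pow_self (n := N)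
    have h2 : (2:ℝ) ^ N ≤ (2:ℝ) ^ m := by
      apply pow_le_pow_right₀ (by norm_num)
      omega
    linarith
  set k : ℕ := 2 * m with hkdef
  have hk2 : 2 ≤ k := by omega
  set n : ℕ := 2 ^ k with hn
  have hn4 : 4 ≤ n := by
    rw [hn]
    calc 4 = 2 ^ 2 := rfl
    _ ≤ 2 ^ k := Nat.pow_le_pow_right (by norm_num) hk2
  have hCk : C ^ 2 * (k : ℝ) < (2:ℝ) ^ k := by
    have h2m : ((2 * m : ℕ) : ℝ) ≤ (2:ℝ) ^ m := by
      have := two_mul_le_two_pow m hm1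
      calc ((2 * m : ℕ) : ℝ) ≤ ((2 ^ m : ℕ) : ℝ) := by exact_mod_cast this
      _ = (2:ℝ) ^ m := by push_cast; ring
    have hkpos : (0:ℝ) < ((2 * m : ℕ) : ℝ) := by positivity
    have hppos : (0:ℝ) < (2:ℝ) ^ m := by positivity
    calc C ^ 2 * (k : ℝ) = C ^ 2 * ((2 * m : ℕ) : ℝ) := by rw [hkdef]
    _ < (2:ℝ) ^ m * ((2 * m : ℕ) : ℝ) := by
        apply mul_lt_mul_of_pos_right hCm hkpos
    _ ≤ (2:ℝ) ^ m * ((2:ℝ) ^ m) := by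
        apply mul_le_mul_of_nonneg_left h2m (le_of_lt hppos)
    _ = (2:ℝ) ^ (2 * m) := by rw [← pow_add]; ring_nf
    _ = (2:ℝ) ^ k := by rw [hkdef]
  -- the graph
  set z : Fin n := ⟨0, by omega⟩ with hzdef
  set o : Fin n := ⟨1, by omega⟩ with hodef
  have hzo : z ≠ o := by
    intro h; rw [Fin.ext_iff] at h; simp [hzdef, hodef] at h
  obtain ⟨P, hP, hPne, hPcard, hPreg⟩ := chain n k hk2 hn z o rfl rfl
  refine ⟨n, w2 z o, P, fun a b => w2_symm z o a b, fun a b => w2_nonneg z o a b,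
    sepThm_w2 z o hzo, hP, hPne, ?_, ?_, ?_⟩
  -- basic quantities
  all_goals {
    have htot : totW (w2 z o) (Finset.univ : Finset (Fin n)) = 1 := by
      rw [totW_w2 z o hzo, if_pos ⟨Finset.mem_univ z, Finset.mem_univ o⟩]
    have hsum : ∑ p ∈ P, totW (w2 z o) p = 0 := by
      apply Finset.sum_eq_zero
      intro p hp
      rw [totW_w2 z o hzo, if_neg (hPreg p hp)]
    have hp1 : 1 ≤ P.card := Finset.card_pos.mpr hPne
    have hlog2 : (1:ℝ)/2 ≤ Real.log 2 := by
      have := Real.log_two_gt_d9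
      linarith
    first
    | -- card bound
      ( have hlogn : Real.log n = (k : ℝ) * Real.log 2 := by
          rw [hn]
          push_cast
          rw [Real.log_pow]
        rw [hlogn]
        have h1 : (P.card : ℝ) ≤ (k : ℝ) := by exact_mod_cast hPcard
        nlinarith [Nat.cast_nonneg (α := ℝ) k]
        done )
    | -- middle inequality
      ( rw [htot, hsum]; norm_num; done )
    | -- final inequality
      ( rw [htot, hsum, mul_one, sub_zero, show (1:ℝ) - 1/2 = 1/2 by norm_num]
        have hppos : (0:ℝ) < (P.card : ℝ) := by exact_mod_cast hp1
        have hkpos : (0:ℝ) < (k : ℝ) := by positivity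
        have hpk : (P.card : ℝ) ≤ (k : ℝ) := by exact_mod_cast hPcard
        have hncast : ((n:ℕ) : ℝ) = (2:ℝ) ^ k := by rw [hn]; push_cast; ring
        have hXpos : 0 < (n : ℝ) / (P.card : ℝ) := by
          apply div_pos _ hppos
          rw [hncast]; positivity
        have hC2X : C ^ 2 < (n : ℝ) / (P.card : ℝ) := by
          have h1 : C ^ 2 < (2:ℝ) ^ k / (k : ℝ) := (lt_div_iff₀ hkpos).mpr hCk
          have h2 : (2:ℝ) ^ k / (k : ℝ) ≤ (2:ℝ) ^ k / (P.card : ℝ) :=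
            div_le_div_of_nonneg_left (by positivity) hppos hpk
          rw [hncast]
          linarith
        have hCX : C < ((n : ℝ) / (P.card : ℝ)) ^ ((1:ℝ)/2) := by
          rw [← Real.sqrt_eq_rpow]
          exact (Real.lt_sqrt (le_of_lt hC)).mpr hC2X
        have hXp : (0:ℝ) < ((n : ℝ) / (P.card : ℝ)) ^ ((1:ℝ)/2) :=
          Real.rpow_pos_of_pos hXpos _
        rw [div_lt_one hXp]
        exact hCX
        done )
  }
end
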